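/- Let A : ℝ → ℝ be continuous and nowhere zero, and let t, t₁ : ℝ → ℝ be differentiable with t₁'(x) = t'(x) + A(t(x) − t₁(x)) for all x. Let G be an antiderivative of 1/A. Then F(x) = x + G(t(x) − t₁(x)) satisfies F'(x) = 0 for all x. -/

import Mathlib

open Real

theorem stmt_1 (A : ℝ → ℝ) (hA : Continuous A) (hA0 : ∀ u, A u ≠ 0)
    (t t₁ : ℝ → ℝ) (ht : Differentiable ℝ t) (ht₁ : Differentiable ℝ t₁)
    (hchain : ∀ x, deriv t₁ x = deriv t x + A (t x - t₁ x))
    (G : ℝ → ℝ) (hG : ∀ u, HasDerivAt G (1 / A u) u) :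
    ∀ x, deriv (fun y => y + G (t y - t₁ y)) x = 0 := by
  intro x
  have hτ : HasDerivAt (fun y => t y - t₁ y) (deriv t x - deriv t₁ x) x :=
    ((ht x).hasDerivAt).sub ((ht₁ x).hasDerivAt)
  have hGc : HasDerivAt (fun y => G (t y - t₁ y))
      (1 / A (t x - t₁ x) * (deriv t x - deriv t₁ x)) x :=
    (hG (t x - t₁ x)).comp x hτ
  have hF : HasDerivAt (fun y => y + G (t y - t₁ y))
      (1 + 1 / A (t x - t₁ x) * (deriv t x - deriv t₁ x)) x :=
    (hasDerivAt_id x).add hGc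
  rw [hF.deriv, hchain x]
  field_simp
  rw [show deriv t x - (deriv t x + A (t x - t₁ x)) = -A (t x - t₁ x) by ring, neg_div, div_self (hA0 _)]
  ring
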